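/- Let Σ be a type, M and N monoids, φ₁ : Σ* → M and φ₂ : Σ* → N monoid homomorphisms from the free monoid on Σ, and a ∈ Σ. For w ∈ Σ* define the finite set ζ_a(w) := {(φ₁(u), φ₂(v)) ∈ M × N : u, v ∈ Σ*, w = u·a·v}. Then the map Σ* → ◊(M,N) sending w to (ζ_a(w), φ₁(w), φ₂(w)) is a monoid homomorphism. -/

import Mathlib

/-- The multiplication of the binary Schützenberger product `◊(M,N)` on
`Finset (M × N) × M × N`: `(S,m₁,n₁)·(T,m₂,n₂) = (m₁·T ∪ S·n₂, m₁·m₂, n₁·n₂)`. -/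
def dMul2 {M N : Type*} [Monoid M] [Monoid N] [DecidableEq M] [DecidableEq N]
    (p q : Finset (M × N) × M × N) : Finset (M × N) × M × N :=
  (q.1.image (fun t => (p.2.1 * t.1, t.2)) ∪ p.1.image (fun s => (s.1, s.2 * q.2.2)),
   p.2.1 * q.2.1, p.2.2 * q.2.2)

/-- The finite set `ζ_a(w) = {(φ₁(u), φ₂(v)) : w = u·a·v}`, realised as a `Finset` by
ranging over the (finitely many) positions at which `w` carries the letter `a`. -/
def zetaA {A M N : Type*} [Monoid M] [Monoid N] [DecidableEq A] [DecidableEq M]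
    [DecidableEq N] (φ₁ : FreeMonoid A →* M) (φ₂ : FreeMonoid A →* N) (a : A)
    (w : List A) : Finset (M × N) :=
  ((Finset.range w.length).filter fun i => w[i]? = some a).image
    fun i => (φ₁ (FreeMonoid.ofList (w.take i)), φ₂ (FreeMonoid.ofList (w.drop (i + 1))))

lemma mem_zetaA {A M N : Type*} [Monoid M] [Monoid N] [DecidableEq A] [DecidableEq M]
    [DecidableEq N] (φ₁ : FreeMonoid A →* M) (φ₂ : FreeMonoid A →* N) (a : A)
    (w : List A) (p : M × N) :
    p ∈ zetaA φ₁ φ₂ a w ↔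
      ∃ u v : List A, w = u ++ [a] ++ v ∧
        p = (φ₁ (FreeMonoid.ofList u), φ₂ (FreeMonoid.ofList v)) := by
  simp only [zetaA, Finset.mem_image, Finset.mem_filter, Finset.mem_range]
  constructor
  · rintro ⟨i, ⟨hi, ha⟩, rfl⟩
    refine ⟨w.take i, w.drop (i+1), ?_, rfl⟩
    have h1 : w.drop i = a :: w.drop (i+1) := by
      have := List.drop_eq_getElem_cons hi
      simp only [List.getElem?_eq_getElem hi, Option.some.injEq] at ha
      rw [this, ha]
    calc w = w.take i ++ w.drop i := (List.take_append_drop i w).symm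
      _ = w.take i ++ [a] ++ w.drop (i+1) := by rw [h1]; simp
  · rintro ⟨u, v, rfl, rfl⟩
    refine ⟨u.length, ⟨?_, ?_⟩, ?_⟩
    · simp
    · rw [List.append_assoc,
        List.getElem?_append_right (le_refl _)]
      simp
    · congr 2
      · rw [List.append_assoc, List.take_left]
      · rw [List.append_assoc, show u.length + 1 = (u ++ [a]).length by simp,
          ← List.append_assoc, List.drop_left]

/-- `ζ_a(w)` is indeed the set of all `(φ₁(u), φ₂(v))` over factorizations `w = u·a·v`, and
the map `w ↦ (ζ_a(w), φ₁(w), φ₂(w))` is a monoid homomorphism `Σ* → ◊(M,N)`. -/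
theorem stmt7 {A M N : Type*} [Monoid M] [Monoid N] [DecidableEq A] [DecidableEq M]
    [DecidableEq N] (φ₁ : FreeMonoid A →* M) (φ₂ : FreeMonoid A →* N) (a : A) :
    (∀ (w : List A) (p : M × N),
      p ∈ zetaA φ₁ φ₂ a w ↔
        ∃ u v : List A, w = u ++ [a] ++ v ∧
          p = (φ₁ (FreeMonoid.ofList u), φ₂ (FreeMonoid.ofList v))) ∧
    ((zetaA φ₁ φ₂ a [], φ₁ (FreeMonoid.ofList []), φ₂ (FreeMonoid.ofList [])) =
      ((∅ : Finset (M × N)), 1, 1)) ∧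
    (∀ v w : List A,
      (zetaA φ₁ φ₂ a (v ++ w), φ₁ (FreeMonoid.ofList (v ++ w)),
        φ₂ (FreeMonoid.ofList (v ++ w))) =
      dMul2 (zetaA φ₁ φ₂ a v, φ₁ (FreeMonoid.ofList v), φ₂ (FreeMonoid.ofList v))
            (zetaA φ₁ φ₂ a w, φ₁ (FreeMonoid.ofList w), φ₂ (FreeMonoid.ofList w))) := by
  refine ⟨mem_zetaA φ₁ φ₂ a, ?_, ?_⟩
  · simp [zetaA, FreeMonoid.ofList_nil]
  · intro v w
    simp only [dMul2, FreeMonoid.ofList_append, map_mul, Prod.mk.injEq, and_true]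
    ext p
    simp only [Finset.mem_union, Finset.mem_image, mem_zetaA]
    constructor
    · rintro ⟨u, u', huv, rfl⟩
      rcases List.append_eq_append_iff.mp (by simpa [List.append_assoc] using huv) with
        ⟨s, rfl, hs⟩ | ⟨t, rfl, ht⟩
      · left
        exact ⟨_, ⟨s, u', by simpa [List.append_assoc] using hs, rfl⟩, by
          simp [FreeMonoid.ofList_append, map_mul]⟩
      · rcases t with _ | ⟨b, t⟩
        · left
          refine ⟨_, ⟨[], u', by simpa using ht.symm, rfl⟩, by simp⟩
        · obtain ⟨rfl, rfl⟩ : b = a ∧ u' = t ++ w := by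
            have := ht
            simp only [List.cons_append, List.singleton_append, List.cons.injEq] at this
            exact ⟨this.1.symm, this.2⟩
          right
          exact ⟨_, ⟨u, t, by simp, rfl⟩, by simp [FreeMonoid.ofList_append, map_mul]⟩
    · rintro (⟨q, ⟨s, t, rfl, rfl⟩, rfl⟩ | ⟨q, ⟨s, t, rfl, rfl⟩, rfl⟩)
      · exact ⟨v ++ s, t, by simp [List.append_assoc],
          by simp [FreeMonoid.ofList_append, map_mul]⟩
      · exact ⟨s, t ++ w, by simp [List.append_assoc],
          by simp [FreeMonoid.ofList_append, map_mul]⟩
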